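/- Let d̃ ∈ ℕ and let g : ℝ^{d̃} → ℝ be continuously differentiable with ‖∇g(x)‖ ≤ C₀‖x‖ for all x ∈ ℝ^{d̃} and some C₀ > 0. For h > 0 define c_h(x,v;x',v') := h · inf{ ∫₀^h ‖ξ̈(t) + ∇g(ξ(t))‖² dt : ξ ∈ C²([0,h]; ℝ^{d̃}), (ξ(0), ξ̇(0)) = (x,v), (ξ(h), ξ̇(h)) = (x',v') }. Then there exists C > 0, depending only on C₀, such that for all 0 < h ≤ 1 and all x, v, x', v' ∈ ℝ^{d̃}: c_h(x,v;x',v') ≤ C [ h²‖(3/h²)(x' − x − vh) − (v' − v)/h‖² + h⁴‖(v' + v)/h² − (2/h³)(x' − x)‖² + h²( ‖x‖² + h²‖v‖² + h⁴‖(3/h²)(x' − x − vh) − (v' − v)/h‖² + h⁶‖(v' + v)/h² − (2/h³)(x' − x)‖² ) ]. -/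

import Mathlib

open MeasureTheory Filter
open scoped ENNReal NNReal RealInnerProductSpace Topology Classical

noncomputable section

/-- `ℝ^d` with the Euclidean norm. -/
abbrev Euc (d : ℕ) : Type := EuclideanSpace ℝ (Fin d)

/-- the variational (mean squared acceleration) cost for the Kramers equation:
`c_h(x,v;x',v') = h inf { ∫₀^h ‖ξ̈(t) + ∇g(ξ(t))‖² dt }` over `C²` curves joining `(x,v)`
to `(x',v')` in position and velocity. -/
def cKram {dt : ℕ} (g : Euc dt → ℝ) (h : ℝ)
    (q : (Euc dt × Euc dt) × (Euc dt × Euc dt)) : ℝ :=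
  h * sInf { r : ℝ | ∃ ξ : ℝ → Euc dt, ContDiff ℝ 2 ξ ∧
    ξ 0 = q.1.1 ∧ deriv ξ 0 = q.1.2 ∧ ξ h = q.2.1 ∧ deriv ξ h = q.2.2 ∧
    r = ∫ t in (0:ℝ)..h, ‖deriv (deriv ξ) t + gradient g (ξ t)‖ ^ 2 }

lemma three_sq' (α β γ : ℝ) : (α + β + γ) ^ 2 ≤ 3 * (α ^ 2 + β ^ 2 + γ ^ 2) := by
  nlinarith [sq_nonneg (α - β), sq_nonneg (β - γ), sq_nonneg (α - γ)]

lemma four_sq' (α β γ δ : ℝ) : (α + β + γ + δ) ^ 2 ≤ 4 * (α ^ 2 + β ^ 2 + γ ^ 2 + δ ^ 2) := by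
  nlinarith [sq_nonneg (α - β), sq_nonneg (α - γ), sq_nonneg (α - δ), sq_nonneg (β - γ),
    sq_nonneg (β - δ), sq_nonneg (γ - δ)]

lemma scalar_bound' (C₀ p q X V t h : ℝ) (ht0 : 0 ≤ t) (hth : t ≤ h) :
    (2 * p + 6 * t * q + C₀ * (X + t * V + t ^ 2 * p + t ^ 3 * q)) ^ 2 ≤
      12 * p ^ 2 + 108 * h ^ 2 * q ^ 2
      + 12 * C₀ ^ 2 * (X ^ 2 + h ^ 2 * V ^ 2 + h ^ 4 * p ^ 2 + h ^ 6 * q ^ 2) := by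
  have ht2 : t ^ 2 ≤ h ^ 2 := pow_le_pow_left₀ ht0 hth 2
  have ht4 : t ^ 4 ≤ h ^ 4 := pow_le_pow_left₀ ht0 hth 4
  have ht6 : t ^ 6 ≤ h ^ 6 := pow_le_pow_left₀ ht0 hth 6
  have step1 := three_sq' (2 * p) (6 * t * q) (C₀ * (X + t * V + t ^ 2 * p + t ^ 3 * q))
  have step2 := four_sq' X (t * V) (t ^ 2 * p) (t ^ 3 * q)
  have m1 : t ^ 2 * q ^ 2 ≤ h ^ 2 * q ^ 2 := mul_le_mul_of_nonneg_right ht2 (sq_nonneg q)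
  have m5 : C₀ ^ 2 * (X + t * V + t ^ 2 * p + t ^ 3 * q) ^ 2
      ≤ C₀ ^ 2 * (4 * (X ^ 2 + (t * V) ^ 2 + (t ^ 2 * p) ^ 2 + (t ^ 3 * q) ^ 2)) :=
    mul_le_mul_of_nonneg_left step2 (sq_nonneg C₀)
  have m2 : C₀ ^ 2 * (t ^ 2 * V ^ 2) ≤ C₀ ^ 2 * (h ^ 2 * V ^ 2) :=
    mul_le_mul_of_nonneg_left (mul_le_mul_of_nonneg_right ht2 (sq_nonneg V)) (sq_nonneg C₀)
  have m3 : C₀ ^ 2 * (t ^ 4 * p ^ 2) ≤ C₀ ^ 2 * (h ^ 4 * p ^ 2) :=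
    mul_le_mul_of_nonneg_left (mul_le_mul_of_nonneg_right ht4 (sq_nonneg p)) (sq_nonneg C₀)
  have m4 : C₀ ^ 2 * (t ^ 6 * q ^ 2) ≤ C₀ ^ 2 * (h ^ 6 * q ^ 2) :=
    mul_le_mul_of_nonneg_left (mul_le_mul_of_nonneg_right ht6 (sq_nonneg q)) (sq_nonneg C₀)
  nlinarith [step1, m1, m5, m2, m3, m4]

lemma final_bound' (C₀ p q X V h : ℝ) (hp : 0 ≤ p) (hq : 0 ≤ q) (hX : 0 ≤ X) (hV : 0 ≤ V) :
    h * (h * (12 * p ^ 2 + 108 * h ^ 2 * q ^ 2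
        + 12 * C₀ ^ 2 * (X ^ 2 + h ^ 2 * V ^ 2 + h ^ 4 * p ^ 2 + h ^ 6 * q ^ 2)))
      ≤ (108 + 12 * C₀ ^ 2) * (h ^ 2 * p ^ 2 + h ^ 4 * q ^ 2
        + h ^ 2 * (X ^ 2 + h ^ 2 * V ^ 2 + h ^ 4 * p ^ 2 + h ^ 6 * q ^ 2)) := by
  have n1 : (0:ℝ) ≤ h ^ 2 * p ^ 2 := by positivity
  have n2 : (0:ℝ) ≤ C₀ ^ 2 * (h ^ 2 * p ^ 2) := by positivity
  have n3 : (0:ℝ) ≤ C₀ ^ 2 * (h ^ 4 * q ^ 2) := by positivity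
  have n4 : (0:ℝ) ≤ h ^ 2 * (X ^ 2 + h ^ 2 * V ^ 2 + h ^ 4 * p ^ 2 + h ^ 6 * q ^ 2) := by
    positivity
  nlinarith [n1, n2, n3, n4]

set_option maxHeartbeats 1000000 in
/-- Proof of Proposition 3.3: upper bound for the variational Kramers cost
by testing with the interpolating cubic. -/
theorem statement_19
    (dt : ℕ) (g : Euc dt → ℝ) (C₀ : ℝ) (hC₀ : 0 < C₀)
    (hg : ContDiff ℝ 1 g) (hgrad : ∀ x : Euc dt, ‖gradient g x‖ ≤ C₀ * ‖x‖) :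
    ∃ C > (0:ℝ), ∀ h : ℝ, 0 < h → h ≤ 1 → ∀ x v x' v' : Euc dt,
      cKram g h ((x, v), (x', v')) ≤
        C * (h ^ 2 * ‖(3 / h ^ 2) • (x' - x - h • v) - (1 / h) • (v' - v)‖ ^ 2
          + h ^ 4 * ‖(1 / h ^ 2) • (v' + v) - (2 / h ^ 3) • (x' - x)‖ ^ 2
          + h ^ 2 * (‖x‖ ^ 2 + h ^ 2 * ‖v‖ ^ 2
            + h ^ 4 * ‖(3 / h ^ 2) • (x' - x - h • v) - (1 / h) • (v' - v)‖ ^ 2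
            + h ^ 6 * ‖(1 / h ^ 2) • (v' + v) - (2 / h ^ 3) • (x' - x)‖ ^ 2)) := by
  refine ⟨108 + 12 * C₀ ^ 2, by positivity, ?_⟩
  intro h hh hh1 x v x' v'
  have hne : h ≠ 0 := hh.ne'
  set a : Euc dt := (3 / h ^ 2) • (x' - x - h • v) - (1 / h) • (v' - v) with ha
  set b : Euc dt := (1 / h ^ 2) • (v' + v) - (2 / h ^ 3) • (x' - x) with hb
  set ξ : ℝ → Euc dt := fun t => x + t • v + (t ^ 2) • a + (t ^ 3) • b with hξ
  -- smoothness
  have hcd : ContDiff ℝ 2 ξ :=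
    ((contDiff_const.add (contDiff_id.smul contDiff_const)).add
      ((contDiff_id.pow 2).smul contDiff_const)).add
      ((contDiff_id.pow 3).smul contDiff_const)
  -- first derivative
  have hd1 : ∀ t : ℝ, HasDerivAt ξ (v + (2 * t) • a + (3 * t ^ 2) • b) t := by
    intro t
    have := (((hasDerivAt_const t x).add ((hasDerivAt_id t).smul_const v)).add
      ((hasDerivAt_pow 2 t).smul_const a)).add ((hasDerivAt_pow 3 t).smul_const b)
    simp [pow_one] at this
    exact this
  have hderiv1 : deriv ξ = fun t => v + (2 * t) • a + (3 * t ^ 2) • b :=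
    funext fun t => (hd1 t).deriv
  have hd2 : ∀ t : ℝ, HasDerivAt (deriv ξ) ((2 : ℝ) • a + (6 * t) • b) t := by
    intro t
    rw [hderiv1]
    have key := ((hasDerivAt_const t v).add
      (((hasDerivAt_id t).const_mul (2 : ℝ)).smul_const a)).add
      (((hasDerivAt_pow 2 t).const_mul (3 : ℝ)).smul_const b)
    have key2 : HasDerivAt (fun s : ℝ => v + (2 * s) • a + (3 * s ^ 2) • b)
        ((2 : ℝ) • a + ((3 : ℝ) * (2 * t)) • b) t := by simp at key; exact key
    have heq : (2 : ℝ) • a + ((6 : ℝ) * t) • b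
        = (2 : ℝ) • a + ((3 : ℝ) * (2 * t)) • b := by module
    rw [heq]
    exact key2
  have hderiv2 : ∀ t : ℝ, deriv (deriv ξ) t = (2 : ℝ) • a + (6 * t) • b :=
    fun t => (hd2 t).deriv
  -- endpoints
  have he0 : ξ 0 = x := by simp [hξ]
  have he0' : deriv ξ 0 = v := by rw [hderiv1]; simp
  have heh : ξ h = x' := by
    simp only [hξ, ha, hb]
    match_scalars <;> field_simp <;> ring
  have heh' : deriv ξ h = v' := by
    rw [hderiv1]
    simp only [ha, hb]
    match_scalars <;> field_simp <;> ring
  -- continuity of gradient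
  have hGcont : Continuous (fun y : Euc dt => gradient g y) := by
    have h1 : Continuous (fderiv ℝ g) := hg.continuous_fderiv one_ne_zero
    exact (InnerProductSpace.toDual ℝ (Euc dt)).symm.continuous.comp h1
  -- the value of the test curve
  set r : ℝ := ∫ t in (0:ℝ)..h, ‖deriv (deriv ξ) t + gradient g (ξ t)‖ ^ 2 with hr
  have hmem : r ∈ { s : ℝ | ∃ ζ : ℝ → Euc dt, ContDiff ℝ 2 ζ ∧
      ζ 0 = x ∧ deriv ζ 0 = v ∧ ζ h = x' ∧ deriv ζ h = v' ∧
      s = ∫ t in (0:ℝ)..h, ‖deriv (deriv ζ) t + gradient g (ζ t)‖ ^ 2 } :=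
    ⟨ξ, hcd, he0, he0', heh, heh', rfl⟩
  have hbdd : BddBelow { s : ℝ | ∃ ζ : ℝ → Euc dt, ContDiff ℝ 2 ζ ∧
      ζ 0 = x ∧ deriv ζ 0 = v ∧ ζ h = x' ∧ deriv ζ h = v' ∧
      s = ∫ t in (0:ℝ)..h, ‖deriv (deriv ζ) t + gradient g (ζ t)‖ ^ 2 } := by
    refine ⟨0, ?_⟩
    rintro s ⟨ζ, -, -, -, -, -, rfl⟩
    apply intervalIntegral.integral_nonneg hh.le
    intro t _
    positivity
  -- rewrite r
  have hr2 : r = ∫ t in (0:ℝ)..h, ‖(2 : ℝ) • a + (6 * t) • b + gradient g (ξ t)‖ ^ 2 := by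
    rw [hr]
    congr 1
    ext t
    rw [hderiv2]
  -- constant bound
  set B : ℝ := 12 * ‖a‖ ^ 2 + 108 * h ^ 2 * ‖b‖ ^ 2
      + 12 * C₀ ^ 2 * (‖x‖ ^ 2 + h ^ 2 * ‖v‖ ^ 2 + h ^ 4 * ‖a‖ ^ 2 + h ^ 6 * ‖b‖ ^ 2) with hB
  have hptwise : ∀ t ∈ Set.Icc (0:ℝ) h,
      ‖(2 : ℝ) • a + (6 * t) • b + gradient g (ξ t)‖ ^ 2 ≤ B := by
    rintro t ⟨ht0, hth⟩
    have hξnorm : ‖ξ t‖ ≤ ‖x‖ + t * ‖v‖ + t ^ 2 * ‖a‖ + t ^ 3 * ‖b‖ := by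
      calc ‖ξ t‖ ≤ ‖x + t • v + (t ^ 2) • a‖ + ‖(t ^ 3) • b‖ := norm_add_le _ _
        _ ≤ (‖x + t • v‖ + ‖(t ^ 2) • a‖) + ‖(t ^ 3) • b‖ := by
            gcongr; exact norm_add_le _ _
        _ ≤ ((‖x‖ + ‖t • v‖) + ‖(t ^ 2) • a‖) + ‖(t ^ 3) • b‖ := by
            gcongr; exact norm_add_le _ _
        _ = ‖x‖ + t * ‖v‖ + t ^ 2 * ‖a‖ + t ^ 3 * ‖b‖ := by
            rw [norm_smul, norm_smul, norm_smul]
            simp [abs_of_nonneg ht0, abs_of_nonneg (pow_nonneg ht0 2),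
              abs_of_nonneg (pow_nonneg ht0 3)]
    have hGn : ‖gradient g (ξ t)‖ ≤ C₀ * (‖x‖ + t * ‖v‖ + t ^ 2 * ‖a‖ + t ^ 3 * ‖b‖) :=
      (hgrad (ξ t)).trans (mul_le_mul_of_nonneg_left hξnorm hC₀.le)
    have hsum : ‖(2 : ℝ) • a + (6 * t) • b + gradient g (ξ t)‖ ≤
        2 * ‖a‖ + 6 * t * ‖b‖ + C₀ * (‖x‖ + t * ‖v‖ + t ^ 2 * ‖a‖ + t ^ 3 * ‖b‖) := by
      calc ‖(2 : ℝ) • a + (6 * t) • b + gradient g (ξ t)‖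
          ≤ ‖(2 : ℝ) • a‖ + ‖(6 * t) • b‖ + ‖gradient g (ξ t)‖ := norm_add₃_le
        _ ≤ 2 * ‖a‖ + 6 * t * ‖b‖ + C₀ * (‖x‖ + t * ‖v‖ + t ^ 2 * ‖a‖ + t ^ 3 * ‖b‖) := by
            rw [norm_smul, norm_smul]
            have h6 : |(6 : ℝ) * t| = 6 * t := abs_of_nonneg (by positivity)
            simp only [Real.norm_eq_abs, h6, abs_two]
            gcongr
    have h0 : (0:ℝ) ≤ ‖(2 : ℝ) • a + (6 * t) • b + gradient g (ξ t)‖ := norm_nonneg _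
    have hsq : ‖(2 : ℝ) • a + (6 * t) • b + gradient g (ξ t)‖ ^ 2 ≤
        (2 * ‖a‖ + 6 * t * ‖b‖ + C₀ * (‖x‖ + t * ‖v‖ + t ^ 2 * ‖a‖ + t ^ 3 * ‖b‖)) ^ 2 :=
      pow_le_pow_left₀ h0 hsum 2
    exact hsq.trans (scalar_bound' C₀ ‖a‖ ‖b‖ ‖x‖ ‖v‖ t h ht0 hth)
  -- integrability
  have hcont : Continuous (fun t : ℝ => ‖(2 : ℝ) • a + (6 * t) • b + gradient g (ξ t)‖ ^ 2) :=
    ((continuous_const.add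
      ((continuous_const.mul continuous_id).smul continuous_const)).add
      (hGcont.comp hcd.continuous)).norm.pow 2
  have hrle : r ≤ h * B := by
    rw [hr2]
    calc (∫ t in (0:ℝ)..h, ‖(2 : ℝ) • a + (6 * t) • b + gradient g (ξ t)‖ ^ 2)
        ≤ ∫ _t in (0:ℝ)..h, B := by
          apply intervalIntegral.integral_mono_on hh.le (hcont.intervalIntegrable 0 h)
            intervalIntegrable_const
          intro t ht
          exact hptwise t ht
      _ = h * B := by rw [intervalIntegral.integral_const, sub_zero, smul_eq_mul]
  -- conclude
  have hsinf : sInf { s : ℝ | ∃ ζ : ℝ → Euc dt, ContDiff ℝ 2 ζ ∧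
      ζ 0 = x ∧ deriv ζ 0 = v ∧ ζ h = x' ∧ deriv ζ h = v' ∧
      s = ∫ t in (0:ℝ)..h, ‖deriv (deriv ζ) t + gradient g (ζ t)‖ ^ 2 } ≤ r :=
    csInf_le hbdd hmem
  have hck : cKram g h ((x, v), (x', v')) ≤ h * r := by
    unfold cKram
    exact mul_le_mul_of_nonneg_left hsinf hh.le
  refine hck.trans ((mul_le_mul_of_nonneg_left hrle hh.le).trans ?_)
  rw [hB]
  exact final_bound' C₀ ‖a‖ ‖b‖ ‖x‖ ‖v‖ h (norm_nonneg _) (norm_nonneg _)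
    (norm_nonneg _) (norm_nonneg _)
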